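/- Let u(t,x) = ∫_ℝ φ(y) p(t,x,y) dy where p is the 1-dimensional skew Brownian motion density with parameters σ > 0, q ∈ [-1,1], and φ is bounded continuous. Then u satisfies the flux condition at the origin: for each t > 0, (1+q)/2 · ∂u/∂x(t, 0+) = (1-q)/2 · ∂u/∂x(t, 0-), where ∂u/∂x(t,0±) denote the one-sided limits lim_{ε↓0} ∂u/∂x(t, ±ε). -/

import Mathlib

open Real MeasureTheory Filter Set Topology

noncomputable def sgn (y : ℝ) : ℝ := if 0 < y then 1 else if y < 0 then -1 else 0

/-- Transition density of one-dimensional skew Brownian motion. -/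
noncomputable def skewDensity (σ q t x y : ℝ) : ℝ :=
  (Real.sqrt (2 * Real.pi * t * σ ^ 2))⁻¹ *
    (Real.exp (-(y - x) ^ 2 / (2 * t * σ ^ 2)) +
      q * sgn y * Real.exp (-(|y| + |x|) ^ 2 / (2 * t * σ ^ 2)))

/-- x-derivative of `skewDensity` on the half line of sign `s`. -/
noncomputable def skewD' (σ q t s x y : ℝ) : ℝ :=
  (Real.sqrt (2 * Real.pi * t * σ ^ 2))⁻¹ *
    (2 * (y - x) / (2 * t * σ ^ 2) * Real.exp (-(y - x) ^ 2 / (2 * t * σ ^ 2)) -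
      q * sgn y * (2 * (|y| + |x|) * s / (2 * t * σ ^ 2)) *
        Real.exp (-(|y| + |x|) ^ 2 / (2 * t * σ ^ 2)))

lemma sgn_abs' (y : ℝ) : |sgn y| ≤ 1 := by
  unfold sgn; split_ifs <;> norm_num

lemma sgn_mul_abs (y : ℝ) : sgn y * |y| = y := by
  unfold sgn
  rcases lt_trichotomy 0 y with h | h | h
  · simp [h, abs_of_pos h]
  · simp [← h]
  · simp [h, not_lt.mpr h.le, abs_of_neg h]

lemma measurable_sgn : Measurable sgn :=
  Measurable.ite measurableSet_Ioi measurable_const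
    (Measurable.ite measurableSet_Iio measurable_const measurable_const)

lemma measurable_F (σ q t x : ℝ) (φ : ℝ → ℝ) (hφc : Continuous φ) :
    Measurable (fun y => φ y * skewDensity σ q t x y) := by
  unfold skewDensity
  refine hφc.measurable.mul (Measurable.const_mul (Measurable.add ?_ ?_) _)
  · exact (Continuous.measurable (by continuity))
  · exact (measurable_sgn.const_mul q).mul (Continuous.measurable (by continuity))

lemma measurable_F' (σ q t s x : ℝ) (φ : ℝ → ℝ) (hφc : Continuous φ) :
    Measurable (fun y => φ y * skewD' σ q t s x y) := by
  unfold skewD'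
  refine hφc.measurable.mul (Measurable.const_mul (Measurable.sub ?_ ?_) _)
  · exact (Continuous.measurable (by continuity))
  · refine Measurable.mul (Measurable.mul (measurable_sgn.const_mul q) ?_) ?_
    · exact (Continuous.measurable (by continuity))
    · exact (Continuous.measurable (by continuity))

lemma hasDerivAt_skewD (σ q t s x y : ℝ)
    (hs : s = 1 ∨ s = -1) (hx : 0 < s * x) :
    HasDerivAt (fun x => skewDensity σ q t x y) (skewD' σ q t s x y) x := by
  set c : ℝ := 2 * t * σ ^ 2 with hc
  have habs : ∀ᶠ z in 𝓝 x, |z| = s * z := by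
    have hopen : IsOpen {z : ℝ | 0 < s * z} :=
      isOpen_lt continuous_const (continuous_const.mul continuous_id)
    filter_upwards [hopen.mem_nhds hx] with z hz
    rcases hs with rfl | rfl
    · simp only [one_mul] at hz ⊢; exact abs_of_pos hz
    · simp only [neg_one_mul] at hz ⊢
      rw [abs_of_neg (by linarith)]
  have hxabs : |x| = s * x := by
    rcases hs with rfl | rfl
    · simp only [one_mul] at hx ⊢; exact abs_of_pos hx
    · simp only [neg_one_mul] at hx ⊢; rw [abs_of_neg (by linarith)]
  have h1 : HasDerivAt (fun x : ℝ => -(y - x) ^ 2 / c) (2 * (y - x) / c) x := by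
    have := (((hasDerivAt_id x).const_sub y).pow 2).neg.div_const c
    simp only [id_eq] at this
    refine this.congr_deriv ?_
    norm_num
  have h2 : HasDerivAt (fun x : ℝ => -(|y| + |x|) ^ 2 / c) (-(2 * (|y| + |x|) * s / c)) x := by
    have key : HasDerivAt (fun z : ℝ => -(|y| + s * z) ^ 2 / c)
        (-(2 * (|y| + s * x) * s / c)) x := by
      have := ((((hasDerivAt_id x).const_mul s).const_add |y|).pow 2).neg.div_const c
      simp only [id_eq] at this
      refine this.congr_deriv ?_
      norm_num; ring
    rw [hxabs]
    exact key.congr_of_eventuallyEq (habs.mono fun z hz => by simp only [hz])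
  have H := ((h1.exp).add ((h2.exp).const_mul (q * sgn y))).const_mul
      ((Real.sqrt (2 * Real.pi * t * σ ^ 2))⁻¹)
  refine H.congr_deriv ?_
  unfold skewD'
  rw [← hc]
  ring

lemma exp_quad_bound1 (c R x y : ℝ) (hc : 0 < c) (hx : |x| ≤ R) :
    Real.exp (-(y - x) ^ 2 / c) ≤ Real.exp (R ^ 2 / c) * Real.exp (-(1 / (2 * c)) * y ^ 2) := by
  rw [← Real.exp_add]
  apply Real.exp_le_exp.mpr
  calc -(y - x) ^ 2 / c ≤ (R ^ 2 - y ^ 2 / 2) / c := by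
        apply (div_le_div_iff_of_pos_right hc).mpr
        have hx2 : x ^ 2 ≤ R ^ 2 := by
          rw [← sq_abs x]; exact pow_le_pow_left₀ (abs_nonneg x) hx 2
        nlinarith [sq_nonneg (y - 2 * x)]
    _ = R ^ 2 / c + -(1 / (2 * c)) * y ^ 2 := by field_simp; ring

lemma exp_quad_bound2 (c x y : ℝ) (hc : 0 < c) :
    Real.exp (-(|y| + |x|) ^ 2 / c) ≤ Real.exp (-(1 / (2 * c)) * y ^ 2) := by
  apply Real.exp_le_exp.mpr
  calc -(|y| + |x|) ^ 2 / c ≤ -y ^ 2 / 2 / c := by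
        apply (div_le_div_iff_of_pos_right hc).mpr
        nlinarith [abs_nonneg x, abs_nonneg y, sq_abs y, mul_nonneg (abs_nonneg y) (abs_nonneg x)]
    _ = -(1 / (2 * c)) * y ^ 2 := by ring

lemma est_deriv (c R q s x y : ℝ) (hc : 0 < c) (hq : |q| ≤ 1) (hs : |s| = 1) (hx : |x| ≤ R) :
    |2 * (y - x) / c * Real.exp (-(y - x) ^ 2 / c) -
        q * sgn y * (2 * (|y| + |x|) * s / c) * Real.exp (-(|y| + |x|) ^ 2 / c)|
      ≤ 2 / c * (Real.exp (R ^ 2 / c) + 1) * ((|y| + R) * Real.exp (-(1 / (2 * c)) * y ^ 2)) := by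
  have hR : 0 ≤ R := le_trans (abs_nonneg x) hx
  have e1 := exp_quad_bound1 c R x y hc hx
  have e2 := exp_quad_bound2 c x y hc
  have hyx : |y - x| ≤ |y| + R := (abs_sub _ _).trans (by linarith)
  have hyx2 : |y| + |x| ≤ |y| + R := by linarith
  set E := Real.exp (-(1 / (2 * c)) * y ^ 2) with hE
  have hEpos : 0 < E := Real.exp_pos _
  have hA : |2 * (y - x) / c * Real.exp (-(y - x) ^ 2 / c)|
      ≤ 2 * (|y| + R) / c * (Real.exp (R ^ 2 / c) * E) := by
    rw [abs_mul, abs_of_pos (Real.exp_pos _), abs_div, abs_of_pos hc, abs_mul, abs_two]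
    gcongr
  have hB : |q * sgn y * (2 * (|y| + |x|) * s / c) * Real.exp (-(|y| + |x|) ^ 2 / c)|
      ≤ 2 * (|y| + R) / c * E := by
    have h0 : |(|y| + |x|)| = |y| + |x| := abs_of_nonneg (by positivity)
    simp only [abs_mul, abs_div, abs_two, h0, abs_of_pos hc, abs_of_pos (Real.exp_pos _)]
    calc |q| * |sgn y| * (2 * (|y| + |x|) * |s| / c) * Real.exp (-(|y| + |x|) ^ 2 / c)
        ≤ 1 * 1 * (2 * (|y| + R) * 1 / c) * E := by
          gcongr <;> simp [hs, hq, sgn_abs' y, hyx2]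
      _ = 2 * (|y| + R) / c * E := by ring
  calc |2 * (y - x) / c * Real.exp (-(y - x) ^ 2 / c) -
        q * sgn y * (2 * (|y| + |x|) * s / c) * Real.exp (-(|y| + |x|) ^ 2 / c)|
      ≤ _ + _ := abs_sub _ _
    _ ≤ 2 * (|y| + R) / c * (Real.exp (R ^ 2 / c) * E) + 2 * (|y| + R) / c * E :=
        add_le_add hA hB
    _ = 2 / c * (Real.exp (R ^ 2 / c) + 1) * ((|y| + R) * E) := by ring

lemma est_val (c R q x y : ℝ) (hc : 0 < c) (hq : |q| ≤ 1) (hx : |x| ≤ R) :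
    |Real.exp (-(y - x) ^ 2 / c) + q * sgn y * Real.exp (-(|y| + |x|) ^ 2 / c)|
      ≤ (Real.exp (R ^ 2 / c) + 1) * Real.exp (-(1 / (2 * c)) * y ^ 2) := by
  have e1 := exp_quad_bound1 c R x y hc hx
  have e2 := exp_quad_bound2 c x y hc
  calc |Real.exp (-(y - x) ^ 2 / c) + q * sgn y * Real.exp (-(|y| + |x|) ^ 2 / c)|
      ≤ |Real.exp (-(y - x) ^ 2 / c)| + |q * sgn y * Real.exp (-(|y| + |x|) ^ 2 / c)| :=
        abs_add_le _ _
    _ ≤ Real.exp (R ^ 2 / c) * Real.exp (-(1 / (2 * c)) * y ^ 2)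
        + 1 * 1 * Real.exp (-(1 / (2 * c)) * y ^ 2) := by
        rw [abs_of_pos (Real.exp_pos _), abs_mul, abs_mul, abs_of_pos (Real.exp_pos _)]
        exact add_le_add e1 (by gcongr <;> simp [hq, sgn_abs' y, e2])
    _ = (Real.exp (R ^ 2 / c) + 1) * Real.exp (-(1 / (2 * c)) * y ^ 2) := by ring

lemma integrable_poly_gauss (b R K : ℝ) (hb : 0 < b) :
    Integrable (fun y : ℝ => K * ((|y| + R) * Real.exp (-b * y ^ 2))) := by
  apply Integrable.const_mul
  have h1 : Integrable (fun y : ℝ => |y| * Real.exp (-b * y ^ 2)) := by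
    have := (integrable_mul_exp_neg_mul_sq hb).abs
    refine this.congr (Filter.Eventually.of_forall fun y => ?_)
    show |y * Real.exp (-b * y ^ 2)| = |y| * Real.exp (-b * y ^ 2)
    rw [abs_mul, abs_of_pos (Real.exp_pos _)]
  have h2 : Integrable (fun y : ℝ => R * Real.exp (-b * y ^ 2)) :=
    (integrable_exp_neg_mul_sq hb).const_mul R
  refine (h1.add h2).congr (Filter.Eventually.of_forall fun y => ?_)
  simp only [Pi.add_apply]
  ring

lemma skew_bound_deriv (σ q t s : ℝ) (hσ : 0 < σ) (ht : 0 < t) (hq : |q| ≤ 1) (hs : |s| = 1)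
    (φ : ℝ → ℝ) (M : ℝ) (hM : ∀ y, |φ y| ≤ M) (R x y : ℝ) (hx : |x| ≤ R) :
    ‖φ y * skewD' σ q t s x y‖ ≤
      M * (Real.sqrt (2 * Real.pi * t * σ ^ 2))⁻¹ *
        (2 / (2 * t * σ ^ 2) * (Real.exp (R ^ 2 / (2 * t * σ ^ 2)) + 1)) *
        ((|y| + R) * Real.exp (-(1 / (2 * (2 * t * σ ^ 2))) * y ^ 2)) := by
  have hc : (0:ℝ) < 2 * t * σ ^ 2 := by positivity
  have hM0 : 0 ≤ M := le_trans (abs_nonneg _) (hM 0)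
  have hC0 : (0:ℝ) ≤ (Real.sqrt (2 * Real.pi * t * σ ^ 2))⁻¹ :=
    inv_nonneg.mpr (Real.sqrt_nonneg _)
  rw [Real.norm_eq_abs, abs_mul]
  unfold skewD'
  rw [abs_mul, abs_of_nonneg hC0]
  calc |φ y| * ((Real.sqrt (2 * Real.pi * t * σ ^ 2))⁻¹ * _)
      ≤ M * ((Real.sqrt (2 * Real.pi * t * σ ^ 2))⁻¹ *
          (2 / (2 * t * σ ^ 2) * (Real.exp (R ^ 2 / (2 * t * σ ^ 2)) + 1) *
            ((|y| + R) * Real.exp (-(1 / (2 * (2 * t * σ ^ 2))) * y ^ 2)))) := by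
        apply mul_le_mul (hM y) ?_ (by positivity) hM0
        exact mul_le_mul_of_nonneg_left (est_deriv _ R q s x y hc hq hs hx) hC0
    _ = _ := by ring

lemma hasDerivAt_skew_integral (σ q t : ℝ) (hσ : 0 < σ) (ht : 0 < t) (hq : |q| ≤ 1)
    (φ : ℝ → ℝ) (hφc : Continuous φ) (M : ℝ) (hM : ∀ y, |φ y| ≤ M)
    (s x₀ : ℝ) (hs : s = 1 ∨ s = -1) (hx₀ : 0 < s * x₀) :
    HasDerivAt (fun ξ : ℝ => ∫ y : ℝ, φ y * skewDensity σ q t ξ y)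
      (∫ y : ℝ, φ y * skewD' σ q t s x₀ y) x₀ := by
  have hc : (0:ℝ) < 2 * t * σ ^ 2 := by positivity
  have hb : (0:ℝ) < 1 / (2 * (2 * t * σ ^ 2)) := by positivity
  have hM0 : 0 ≤ M := le_trans (abs_nonneg _) (hM 0)
  have hC0 : (0:ℝ) ≤ (Real.sqrt (2 * Real.pi * t * σ ^ 2))⁻¹ :=
    inv_nonneg.mpr (Real.sqrt_nonneg _)
  have hss : |s| = 1 := by rcases hs with rfl | rfl <;> norm_num
  have hx0 : x₀ ≠ 0 := by
    intro h; rw [h, mul_zero] at hx₀; exact lt_irrefl 0 hx₀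
  have εpos : 0 < |x₀| := abs_pos.mpr hx0
  have hsx : ∀ x ∈ Metric.ball x₀ |x₀|, 0 < s * x := by
    intro x hx
    rw [Metric.mem_ball, Real.dist_eq] at hx
    have h1 : s * x₀ = |x₀| := by
      have := abs_mul s x₀
      rw [hss, one_mul] at this
      rw [← this, abs_of_pos hx₀]
    have h2 : -|x - x₀| ≤ s * (x - x₀) := by
      have := neg_abs_le (s * (x - x₀))
      rwa [abs_mul, hss, one_mul] at this
    nlinarith [h2]
  have hxR : ∀ x ∈ Metric.ball x₀ |x₀|, |x| ≤ 2 * |x₀| := by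
    intro x hx
    rw [Metric.mem_ball, Real.dist_eq] at hx
    calc |x| = |x₀ + (x - x₀)| := by ring_nf
      _ ≤ |x₀| + |x - x₀| := abs_add_le _ _
      _ ≤ 2 * |x₀| := by linarith
  refine (hasDerivAt_integral_of_dominated_loc_of_deriv_le
    (F' := fun x y => φ y * skewD' σ q t s x y)
    (bound := fun y => M * (Real.sqrt (2 * Real.pi * t * σ ^ 2))⁻¹ *
        (2 / (2 * t * σ ^ 2) * (Real.exp ((2 * |x₀|) ^ 2 / (2 * t * σ ^ 2)) + 1)) *
        ((|y| + 2 * |x₀|) * Real.exp (-(1 / (2 * (2 * t * σ ^ 2))) * y ^ 2)))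
    (Metric.ball_mem_nhds x₀ εpos) ?_ ?_ ?_ ?_ ?_ ?_).2
  · exact Eventually.of_forall fun x =>
      (measurable_F σ q t x φ hφc).aestronglyMeasurable
  · -- integrability of F x₀
    refine Integrable.mono'
      ((integrable_exp_neg_mul_sq hb).const_mul
        (M * (Real.sqrt (2 * Real.pi * t * σ ^ 2))⁻¹ *
          (Real.exp ((2 * |x₀|) ^ 2 / (2 * t * σ ^ 2)) + 1)))
      (measurable_F σ q t x₀ φ hφc).aestronglyMeasurable
      (Eventually.of_forall fun y => ?_)
    rw [Real.norm_eq_abs, abs_mul]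
    unfold skewDensity
    rw [abs_mul, abs_of_nonneg hC0]
    have hest := est_val (2 * t * σ ^ 2) (2 * |x₀|) q x₀ y hc hq
      (by nlinarith [abs_nonneg x₀])
    calc |φ y| * ((Real.sqrt (2 * Real.pi * t * σ ^ 2))⁻¹ * _)
        ≤ M * ((Real.sqrt (2 * Real.pi * t * σ ^ 2))⁻¹ *
            ((Real.exp ((2 * |x₀|) ^ 2 / (2 * t * σ ^ 2)) + 1) *
              Real.exp (-(1 / (2 * (2 * t * σ ^ 2))) * y ^ 2))) := by
          apply mul_le_mul (hM y) ?_ (by positivity) hM0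
          exact mul_le_mul_of_nonneg_left hest hC0
      _ = _ := by ring
  · exact (measurable_F' σ q t s x₀ φ hφc).aestronglyMeasurable
  · exact Eventually.of_forall fun y x hx =>
      skew_bound_deriv σ q t s hσ ht hq hss φ M hM (2 * |x₀|) x y (hxR x hx)
  · exact integrable_poly_gauss _ _ _ hb
  · exact Eventually.of_forall fun y x hx =>
      (hasDerivAt_skewD σ q t s x y hs (hsx x hx)).const_mul (φ y)

lemma tendsto_skewD'_integral (σ q t : ℝ) (hσ : 0 < σ) (ht : 0 < t) (hq : |q| ≤ 1)
    (φ : ℝ → ℝ) (hφc : Continuous φ) (M : ℝ) (hM : ∀ y, |φ y| ≤ M) (s : ℝ) (hs : |s| = 1) :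
    Tendsto (fun x : ℝ => ∫ y : ℝ, φ y * skewD' σ q t s x y) (𝓝 0)
      (𝓝 (∫ y : ℝ, φ y * skewD' σ q t s 0 y)) := by
  have hb : (0:ℝ) < 1 / (2 * (2 * t * σ ^ 2)) := by positivity
  have : ContinuousAt (fun x : ℝ => ∫ y : ℝ, φ y * skewD' σ q t s x y) 0 := by
    refine continuousAt_of_dominated
      (Eventually.of_forall fun x => (measurable_F' σ q t s x φ hφc).aestronglyMeasurable)
      ?_ (integrable_poly_gauss (1 / (2 * (2 * t * σ ^ 2)))
        1 (M * (Real.sqrt (2 * Real.pi * t * σ ^ 2))⁻¹ *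
          (2 / (2 * t * σ ^ 2) * (Real.exp (1 ^ 2 / (2 * t * σ ^ 2)) + 1))) hb) ?_
    · filter_upwards [Metric.ball_mem_nhds (0:ℝ) one_pos] with x hx
      rw [Metric.mem_ball, dist_zero_right, Real.norm_eq_abs] at hx
      exact Eventually.of_forall fun y =>
        skew_bound_deriv σ q t s hσ ht hq hs φ M hM 1 x y hx.le
    · refine Eventually.of_forall fun y => Continuous.continuousAt ?_
      unfold skewD'
      continuity
  exact this.tendsto

theorem flux_condition (σ q : ℝ) (hσ : 0 < σ) (hq : q ∈ Set.Icc (-1 : ℝ) 1)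
    (φ : ℝ → ℝ) (hφc : Continuous φ) (hφb : ∃ M : ℝ, ∀ y, |φ y| ≤ M) (t : ℝ) (ht : 0 < t) :
    ∃ Dp Dm : ℝ,
      Tendsto (fun x : ℝ => deriv (fun ξ : ℝ => ∫ y : ℝ, φ y * skewDensity σ q t ξ y) x)
        (nhdsWithin 0 (Set.Ioi 0)) (nhds Dp) ∧
      Tendsto (fun x : ℝ => deriv (fun ξ : ℝ => ∫ y : ℝ, φ y * skewDensity σ q t ξ y) x)
        (nhdsWithin 0 (Set.Iio 0)) (nhds Dm) ∧
      (1 + q) / 2 * Dp = (1 - q) / 2 * Dm := by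
  obtain ⟨M, hM⟩ := hφb
  have hqabs : |q| ≤ 1 := abs_le.mpr ⟨hq.1, hq.2⟩
  set S : ℝ := ∫ y : ℝ, φ y * ((Real.sqrt (2 * Real.pi * t * σ ^ 2))⁻¹ *
      (2 * y / (2 * t * σ ^ 2) * Real.exp (-y ^ 2 / (2 * t * σ ^ 2)))) with hS
  have key : ∀ s : ℝ, s = 1 ∨ s = -1 →
      (∫ y : ℝ, φ y * skewD' σ q t s 0 y) = (1 - q * s) * S := by
    intro s hs
    have hpt : ∀ y : ℝ, φ y * skewD' σ q t s 0 y =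
        (1 - q * s) * (φ y * ((Real.sqrt (2 * Real.pi * t * σ ^ 2))⁻¹ *
          (2 * y / (2 * t * σ ^ 2) * Real.exp (-y ^ 2 / (2 * t * σ ^ 2))))) := by
      intro y
      have h1 : sgn y * |y| = y := sgn_mul_abs y
      simp only [skewD', abs_zero, add_zero, sub_zero, sq_abs]
      linear_combination (-(q * s * φ y * (Real.sqrt (2 * Real.pi * t * σ ^ 2))⁻¹ *
        (2 / (2 * t * σ ^ 2)) * Real.exp (-y ^ 2 / (2 * t * σ ^ 2)))) * h1
    rw [integral_congr_ae (Eventually.of_forall hpt), integral_const_mul]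
  refine ⟨(1 - q) * S, (1 + q) * S, ?_, ?_, by ring⟩
  · have tend : Tendsto (fun x : ℝ => ∫ y : ℝ, φ y * skewD' σ q t 1 x y) (𝓝[>] 0)
        (𝓝 ((1 - q) * S)) := by
      have h : Tendsto (fun x : ℝ => ∫ y : ℝ, φ y * skewD' σ q t 1 x y) (𝓝[>] 0)
          (𝓝 (∫ y : ℝ, φ y * skewD' σ q t 1 0 y)) :=
        (tendsto_skewD'_integral σ q t hσ ht hqabs φ hφc M hM 1
          (by norm_num)).mono_left nhdsWithin_le_nhds
      rw [key 1 (Or.inl rfl)] at h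
      simpa using h
    refine tend.congr' ?_
    filter_upwards [self_mem_nhdsWithin] with x hx
    exact ((hasDerivAt_skew_integral σ q t hσ ht hqabs φ hφc M hM 1 x (Or.inl rfl)
      (by simpa using hx)).deriv).symm ▸ rfl
  · have tend : Tendsto (fun x : ℝ => ∫ y : ℝ, φ y * skewD' σ q t (-1) x y) (𝓝[<] 0)
        (𝓝 ((1 + q) * S)) := by
      have h : Tendsto (fun x : ℝ => ∫ y : ℝ, φ y * skewD' σ q t (-1) x y) (𝓝[<] 0)
          (𝓝 (∫ y : ℝ, φ y * skewD' σ q t (-1) 0 y)) :=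
        (tendsto_skewD'_integral σ q t hσ ht hqabs φ hφc M hM (-1)
          (by norm_num)).mono_left nhdsWithin_le_nhds
      rw [key (-1) (Or.inr rfl)] at h
      have : (1 : ℝ) - q * (-1) = 1 + q := by ring
      rw [this] at h
      exact h
    refine tend.congr' ?_
    filter_upwards [self_mem_nhdsWithin] with x hx
    have hx' : 0 < (-1 : ℝ) * x := by
      simp only [Set.mem_Iio] at hx; linarith
    exact ((hasDerivAt_skew_integral σ q t hσ ht hqabs φ hφc M hM (-1) x (Or.inr rfl)
      hx').deriv).symm ▸ rfl
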